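/- Let B be a finite abelian p-group, cyclic as ℤ_p[T]-module with generator b and nilpotent T-action, whose socle S(B) = B[p] is cyclic as 𝔽_p[T]-module. Define ψ(x) = (ord(x)/p)·x for x ≠ 0. Then the following are equivalent: (ii) ord(T^i b) is constant for 0 ≤ i < p-rank(B) (empty jump set); (iii) ψ(b) generates S(B) (the socle is straight); (iv) sexp(B) = exp(B), where sexp(B) = min{ord(x) : x ∈ B \ pB}. -/

import Mathlib

open Polynomial Finset

private lemma algCast_apply {A : Type*} [AddCommGroup A] (z : ℤ) (y : A) :
    (algebraMap ℤ (AddMonoid.End A) z) y = z • y := by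
  have : (algebraMap ℤ (AddMonoid.End A) z) = z • (1 : AddMonoid.End A) := by
    rw [zsmul_eq_mul, mul_one]; rfl
  rw [this]; rfl

private lemma end_finsetSum_apply {A : Type*} [AddCommGroup A] {ι : Type*} (s : Finset ι)
    (f : ι → AddMonoid.End A) (y : A) : (∑ i ∈ s, f i) y = ∑ i ∈ s, f i y :=
  AddMonoidHom.finsetSum_apply (f := fun i => (f i : A →+ A)) s y

private lemma aux_inv {p : ℕ} (hp : p.Prime) {A : Type*} [AddCommGroup A]
    (U : AddMonoid.End A) (M : ℕ) (hM : U ^ M = 0)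
    (f : Polynomial ℤ) (hf : ¬ (p:ℤ) ∣ f.coeff 0) :
    ∃ g : Polynomial ℤ, ∀ y : A, p • y = 0 → aeval U g (aeval U f y) = y := by
  haveI : Fact p.Prime := ⟨hp⟩
  have hd0 : (f.coeff 0 : ZMod p) ≠ 0 := by
    rwa [Ne, ZMod.intCast_zmod_eq_zero_iff_dvd]
  obtain ⟨c, hc⟩ : ∃ c : ℤ, (p:ℤ) ∣ c * f.coeff 0 - 1 := by
    refine ⟨((((f.coeff 0 : ZMod p))⁻¹).val : ℤ), ?_⟩
    rw [← ZMod.intCast_zmod_eq_zero_iff_dvd]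
    push_cast
    rw [ZMod.natCast_val, ZMod.cast_id, inv_mul_cancel₀ hd0, sub_self]
  obtain ⟨t, ht⟩ := hc
  set w : Polynomial ℤ := C c * f - 1 with hw
  set v : Polynomial ℤ := X * (C c * f.divX) with hv
  have hwv : C (p:ℤ) ∣ w - v := by
    have h2 : w - v = C (c * f.coeff 0 - 1) := by
      rw [map_sub, map_mul, map_one, hw, hv]
      linear_combination (-(C c)) * (X_mul_divX_add f)
    rw [h2, ht, map_mul]
    exact Dvd.intro _ rfl
  obtain ⟨t2, ht2⟩ := dvd_trans hwv (sub_dvd_pow_sub_pow w v M)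
  refine ⟨C c * ∑ j ∈ range M, (-w) ^ j, fun y hy => ?_⟩
  have hgeom : (∑ j ∈ range M, (-w) ^ j) * (-w - 1) = (-w) ^ M - 1 := geom_sum_mul (-w) M
  have hkey : (C c * ∑ j ∈ range M, (-w) ^ j) * f = 1 - (-w) ^ M := by
    have hcf : C c * f = 1 + w := by rw [hw]; ring
    calc (C c * ∑ j ∈ range M, (-w) ^ j) * f = (∑ j ∈ range M, (-w) ^ j) * (C c * f) := by ring
    _ = (∑ j ∈ range M, (-w) ^ j) * (1 + w) := by rw [hcf]
    _ = 1 - (-w) ^ M := by linear_combination -hgeom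
  have happ : aeval U ((C c * ∑ j ∈ range M, (-w) ^ j) * f) y = aeval U (1 - (-w)^M) y := by
    rw [hkey]
  rw [map_mul] at happ
  have hvM : aeval U (v ^ M) = 0 := by
    rw [hv, mul_pow, map_mul, map_pow, aeval_X, hM, zero_mul]
  have hCp : aeval U (C (p:ℤ) * t2) y = 0 := by
    rw [mul_comm, map_mul]
    show aeval U t2 (aeval U (C (p:ℤ)) y) = 0
    rw [aeval_C, algCast_apply, natCast_zsmul, hy, map_zero]
  have hnegw : aeval U ((-w) ^ M) y = 0 := by
    have hwM : w ^ M = v ^ M + C (p:ℤ) * t2 := by linear_combination ht2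
    rw [neg_pow, hwM, map_mul, map_add]
    show aeval U ((-1:Polynomial ℤ)^M) ((aeval U (v^M) + aeval U (C (p:ℤ) * t2)) y) = 0
    have : (aeval U (v^M) + aeval U (C (p:ℤ) * t2)) y = 0 := by
      show aeval U (v^M) y + aeval U (C (p:ℤ) * t2) y = 0
      rw [hvM, hCp]; simp
    rw [this, map_zero]
  calc aeval U (C c * ∑ j ∈ range M, (-w) ^ j) (aeval U f y)
      = (aeval U (C c * ∑ j ∈ range M, (-w) ^ j) * aeval U f) y := rfl
    _ = aeval U (1 - (-w)^M) y := happ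
    _ = aeval U 1 y - aeval U ((-w)^M) y := by rw [map_sub]; rfl
    _ = y := by rw [hnegw, map_one, sub_zero]; rfl

private lemma aux_sum_zero {p : ℕ} (hp : p.Prime) {A : Type*} [AddCommGroup A]
    (U : AddMonoid.End A) (M : ℕ) (hM : U ^ M = 0)
    (y : A) (hy : p • y = 0) (d : ℕ → ℤ) (m : ℕ) (hm : 0 < m)
    (hd : ¬ (p:ℤ) ∣ d 0) (hsum : ∑ i ∈ range m, d i • (U ^ i) y = 0) : y = 0 := by
  set f : Polynomial ℤ := ∑ i ∈ range m, C (d i) * X ^ i with hf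
  have hc0 : f.coeff 0 = d 0 := by
    rw [hf, finset_sum_coeff]
    simp [coeff_C_mul, coeff_X_pow, Finset.sum_ite_eq', hm]
  have heval : aeval U f y = 0 := by
    rw [hf, map_sum, end_finsetSum_apply, ← hsum]
    refine Finset.sum_congr rfl fun i _ => ?_
    rw [map_mul, map_pow, aeval_X, aeval_C]
    show (algebraMap ℤ (AddMonoid.End A) (d i)) ((U ^ i) y) = d i • (U ^ i) y
    rw [algCast_apply]
  obtain ⟨g, hg⟩ := aux_inv hp U M hM f (by rwa [hc0])
  have := hg y hy
  rw [heval, map_zero] at this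
  exact this.symm

private lemma aux_card_le {p : ℕ} (hp : p.Prime) {A : Type*} [AddCommGroup A] [Finite A]
    (U : AddMonoid.End A) (a : A)
    (hcyc : ∀ x : A, ∃ f : Polynomial ℤ, x = aeval U f a)
    (hpa : ∀ j : ℕ, p • (U ^ j) a = 0)
    (n : ℕ) (hn : (U ^ n) a = 0) :
    Nat.card A ≤ p ^ n := by
  haveI : Fact p.Prime := ⟨hp⟩
  have hzsmul : ∀ (z : ℤ) (j : ℕ), (p:ℤ) ∣ z → z • (U ^ j) a = 0 := by
    intro z j ⟨k, hk⟩
    rw [hk, mul_comm, mul_smul]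
    rw [show ((p:ℤ) • (U^j) a) = p • (U^j) a from natCast_zsmul _ _, hpa, smul_zero]
  have hsurj : Function.Surjective (fun c : Fin n → ZMod p =>
      ∑ i : Fin n, ((c i).val : ℤ) • (U ^ (i:ℕ)) a) := by
    intro x
    obtain ⟨f, hfx⟩ := hcyc x
    refine ⟨fun i => ((f.coeff i : ZMod p)), ?_⟩
    have key : ∀ i : ℕ, (((f.coeff i : ZMod p)).val : ℤ) • (U ^ i) a = f.coeff i • (U ^ i) a := by
      intro i
      have hdvd : (p:ℤ) ∣ f.coeff i - ((f.coeff i : ZMod p)).val := by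
        rw [← ZMod.intCast_zmod_eq_zero_iff_dvd]
        push_cast
        rw [ZMod.natCast_val, ZMod.cast_id, sub_self]
      have := hzsmul _ i hdvd
      rw [sub_smul, sub_eq_zero] at this
      exact this.symm
    simp only [key]
    -- now show ∑_{i<n} f.coeff i • U^i a = x
    have hx2 : x = ∑ i ∈ range (max n (f.natDegree + 1)), f.coeff i • (U ^ i) a := by
      rw [hfx, Polynomial.aeval_eq_sum_range' (lt_of_lt_of_le (Nat.lt_succ_self _) (le_max_right _ _))]
      rw [end_finsetSum_apply]
      rfl
    rw [Fin.sum_univ_eq_sum_range (fun i => f.coeff i • (U ^ i) a) n, hx2]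
    apply Finset.sum_subset (Finset.range_subset_range.mpr (le_max_left _ _))
    intro i _ hi
    rw [Finset.mem_range, not_lt] at hi
    have : (U ^ i) a = 0 := by
      have h2 : U ^ i = U ^ (i - n) * U ^ n := by rw [← pow_add, Nat.sub_add_cancel hi]
      rw [h2]
      show (U ^ (i-n)) ((U ^ n) a) = 0
      rw [hn, map_zero]
    rw [this, smul_zero]
  calc Nat.card A ≤ Nat.card (Fin n → ZMod p) := Nat.card_le_card_of_surjective _ hsurj
    _ = p ^ n := by simp [Nat.card_eq_fintype_card]

private lemma aux_card_ge {p : ℕ} (hp : p.Prime) {A : Type*} [AddCommGroup A] [Finite A]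
    (U : AddMonoid.End A) (M : ℕ) (hM : U ^ M = 0) (a : A)
    (hpa : ∀ j : ℕ, p • (U ^ j) a = 0)
    (n : ℕ) (hn' : ∀ i < n, (U ^ i) a ≠ 0) :
    p ^ n ≤ Nat.card A := by
  haveI : Fact p.Prime := ⟨hp⟩
  have hinj : Function.Injective (fun c : Fin n → ZMod p =>
      ∑ i : Fin n, ((c i).val : ℤ) • (U ^ (i:ℕ)) a) := by
    intro c c' hcc
    simp only at hcc
    set d : ℕ → ℤ := fun i => if h : i < n then ((c ⟨i, h⟩).val : ℤ) - ((c' ⟨i, h⟩).val : ℤ) else 0 with hd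
    have hsum0 : ∑ i ∈ range n, d i • (U ^ i) a = 0 := by
      rw [← Fin.sum_univ_eq_sum_range (fun i => d i • (U ^ i) a) n]
      have : ∀ i : Fin n, d (i:ℕ) • (U ^ (i:ℕ)) a
          = ((c i).val : ℤ) • (U ^ (i:ℕ)) a - ((c' i).val : ℤ) • (U ^ (i:ℕ)) a := by
        intro i
        rw [hd]
        simp only [i.isLt, dif_pos, sub_smul]
      rw [Finset.sum_congr rfl (fun i _ => this i), Finset.sum_sub_distrib, hcc, sub_self]
    -- strong induction: all entries equal
    have hall : ∀ i : ℕ, ∀ hi : i < n, c ⟨i, hi⟩ = c' ⟨i, hi⟩ := by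
      intro i
      induction i using Nat.strong_induction_on with
      | _ i IH =>
        intro hi
        by_contra hne
        have hdi : ¬ (p:ℤ) ∣ d i := by
          rw [← ZMod.intCast_zmod_eq_zero_iff_dvd, hd]
          simp only [hi, dif_pos]
          push_cast
          rw [ZMod.natCast_val, ZMod.cast_id, ZMod.natCast_val, ZMod.cast_id]
          exact fun h => hne (sub_eq_zero.mp h)
        have hlow : ∀ j ∈ range i, d j • (U ^ j) a = 0 := by
          intro j hj
          rw [Finset.mem_range] at hj
          have : d j = 0 := by
            rw [hd]
            simp only [lt_trans hj hi, dif_pos]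
            rw [IH j hj (lt_trans hj hi), sub_self]
          rw [this, zero_smul]
        have hsplit : ∑ j ∈ range (n - i), d (i + j) • (U ^ j) ((U ^ i) a) = 0 := by
          have e1 : ∀ j, (U ^ j) ((U ^ i) a) = (U ^ (i + j)) a := by
            intro j
            rw [add_comm, pow_add]
            rfl
          have e2 : ∑ j ∈ range (n - i), d (i + j) • (U ^ (i + j)) a
              = ∑ j ∈ Finset.Ico i n, d j • (U ^ j) a := by
            rw [Finset.sum_Ico_eq_sum_range]
          have e3 : ∑ j ∈ Finset.Ico i n, d j • (U ^ j) a = ∑ j ∈ range n, d j • (U ^ j) a := by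
            rw [← Finset.sum_range_add_sum_Ico _ (le_of_lt hi)]
            rw [Finset.sum_eq_zero hlow, zero_add]
          simp only [e1, e2, e3, hsum0]
        exact hn' i hi (aux_sum_zero hp U M hM _ (hpa i) _ _ (by omega) (by simpa using hdi) hsplit)
    funext j
    have := hall (j:ℕ) j.isLt
    simpa using this
  calc (p:ℕ) ^ n = Nat.card (Fin n → ZMod p) := by simp [Nat.card_eq_fintype_card]
    _ ≤ Nat.card A := Nat.card_le_card_of_injective _ hinj

private lemma aux_pow {A A' : Type*} [AddCommGroup A] [AddCommGroup A']
    (φ : A →+ A') (U : AddMonoid.End A) (U' : AddMonoid.End A')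
    (h : ∀ x, φ (U x) = U' (φ x)) : ∀ (n : ℕ) (x : A), φ ((U ^ n) x) = (U' ^ n) (φ x) := by
  intro n
  induction n with
  | zero => intro x; rfl
  | succ n IH =>
    intro x
    have e1 : (U ^ (n+1)) x = (U ^ n) (U x) := by rw [pow_succ]; rfl
    have e2 : (U' ^ (n+1)) (φ x) = (U' ^ n) (U' (φ x)) := by rw [pow_succ]; rfl
    rw [e1, e2, IH (U x), h x]

private lemma aux_comm {A A' : Type*} [AddCommGroup A] [AddCommGroup A']
    (φ : A →+ A') (U : AddMonoid.End A) (U' : AddMonoid.End A')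
    (h : ∀ x, φ (U x) = U' (φ x)) :
    ∀ (f : Polynomial ℤ) (x : A), φ (aeval U f x) = aeval U' f (φ x) := by
  intro f
  induction f using Polynomial.induction_on' with
  | add f g hf hg =>
    intro x
    rw [map_add, map_add]
    show φ (aeval U f x + aeval U g x) = aeval U' f (φ x) + aeval U' g (φ x)
    rw [map_add, hf, hg]
  | monomial n c =>
    intro x
    rw [Polynomial.aeval_monomial, Polynomial.aeval_monomial]
    show φ ((algebraMap ℤ (AddMonoid.End A) c) ((U ^ n) x))
        = (algebraMap ℤ (AddMonoid.End A') c) ((U' ^ n) (φ x))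
    rw [algCast_apply, algCast_apply, map_zsmul, aux_pow φ U U' h n x]

private lemma aux_ker_card {B : Type*} [AddCommGroup B] [Fintype B] (f : B →+ B) :
    Nat.card f.ker = Nat.card (B ⧸ f.range) := by
  have h1 : Nat.card B = Nat.card (B ⧸ f.ker) * Nat.card f.ker :=
    AddSubgroup.card_eq_card_quotient_mul_card_addSubgroup _
  have h2 : Nat.card B = Nat.card (B ⧸ f.range) * Nat.card f.range :=
    AddSubgroup.card_eq_card_quotient_mul_card_addSubgroup _
  have h3 : Nat.card (B ⧸ f.ker) = Nat.card f.range :=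
    Nat.card_congr (QuotientAddGroup.quotientKerEquivRange f).toEquiv
  have hpos : 0 < Nat.card f.range := Nat.card_pos
  have := h1.symm.trans h2
  rw [h3] at this
  exact Nat.eq_of_mul_eq_mul_left hpos (by linarith [this])

private lemma aux_shift {A : Type*} [AddCommGroup A] (U : AddMonoid.End A) (d : ℕ → ℤ)
    (y : A) (k D : ℕ) (hkD : k ≤ D)
    (hlow : ∀ j < k, d j • (U ^ j) y = 0)
    (hsum : ∑ i ∈ range D, d i • (U ^ i) y = 0) :
    ∑ j ∈ range (D - k), d (k + j) • (U ^ j) ((U ^ k) y) = 0 := by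
  have e1 : ∀ j, (U ^ j) ((U ^ k) y) = (U ^ (k + j)) y := by
    intro j; rw [add_comm, pow_add]; rfl
  have e2 : ∑ j ∈ range (D - k), d (k + j) • (U ^ (k + j)) y
      = ∑ j ∈ Finset.Ico k D, d j • (U ^ j) y := by
    rw [Finset.sum_Ico_eq_sum_range]
  have e3 : ∑ j ∈ Finset.Ico k D, d j • (U ^ j) y = ∑ j ∈ range D, d j • (U ^ j) y := by
    rw [← Finset.sum_range_add_sum_Ico _ hkD,
      Finset.sum_eq_zero (fun j hj => hlow j (Finset.mem_range.mp hj)), zero_add]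
  simp only [e1, e2, e3, hsum]

private lemma aux_zsmul {A : Type*} [AddCommGroup A] {p : ℕ} {z : ℤ} (h : (p:ℤ) ∣ z)
    {y : A} (hy : p • y = 0) : z • y = 0 := by
  obtain ⟨t, rfl⟩ := h
  rw [mul_comm, mul_smul, natCast_zsmul, hy, smul_zero]

theorem stmt_16 (p : ℕ) (hp : p.Prime) (B : Type*) [AddCommGroup B] [Fintype B]
    (hpB : ∀ x : B, ∃ k : ℕ, p ^ k • x = 0)
    (T : AddMonoid.End B) (hnil : ∃ M : ℕ, T ^ M = 0)
    (b : B) (hb : b ≠ 0)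
    (hcyc : ∀ x : B, ∃ f : Polynomial ℤ, x = Polynomial.aeval T f b)
    (s : B) (hsS : p • s = 0)
    (hsoc : ∀ x : B, p • x = 0 → ∃ f : Polynomial ℤ, x = Polynomial.aeval T f s)
    (r' : ℕ) (hr : Nat.card (B ⧸ (p • AddMonoidHom.id B).range) = p ^ r') :
    ((∀ i < r', addOrderOf ((T ^ i) b) = addOrderOf b) ↔
      (∀ x : B, p • x = 0 →
        ∃ f : Polynomial ℤ, x = Polynomial.aeval T f ((addOrderOf b / p) • b))) ∧
    ((∀ x : B, p • x = 0 →
        ∃ f : Polynomial ℤ, x = Polynomial.aeval T f ((addOrderOf b / p) • b)) ↔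
      (∀ x : B, x ∉ (p • AddMonoidHom.id B).range →
        addOrderOf x = AddMonoid.exponent B)) := by
  classical
  obtain ⟨M, hM⟩ := hnil
  set q : ℕ := addOrderOf b with hqdef
  set q' : ℕ := q / p with hq'def
  -- q = p ^ e
  obtain ⟨k0, hk0⟩ := hpB b
  obtain ⟨e, hele, hqe⟩ := (Nat.dvd_prime_pow hp).mp (addOrderOf_dvd_of_nsmul_eq_zero hk0)
  rw [← hqdef] at hqe
  have hq1 : q ≠ 1 := fun h => hb (AddMonoid.addOrderOf_eq_one_iff.mp h)
  have he1 : 1 ≤ e := by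
    rcases Nat.eq_zero_or_pos e with h | h
    · exfalso; apply hq1; rw [hqe, h, pow_zero]
    · exact h
  have hpq : p ∣ q := by rw [hqe]; exact dvd_pow_self p (by omega)
  have hpq' : p * q' = q := Nat.mul_div_cancel' hpq
  have hq'e : q' = p ^ (e - 1) := by
    rw [hq'def, hqe]
    simpa using Nat.pow_div he1 hp.pos
  have hq'lt : q' < q := by
    rw [hq'e, hqe]
    exact Nat.pow_lt_pow_right hp.one_lt (by omega)
  have hq'pos : 0 < q' := by rw [hq'e]; exact Nat.pow_pos hp.pos
  have hqb : q • b = 0 := addOrderOf_nsmul_eq_zero b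
  -- all orders divide q
  have horddvd : ∀ x : B, q • x = 0 := by
    intro x
    obtain ⟨f, rfl⟩ := hcyc x
    rw [← map_nsmul, hqb, map_zero]
  have hexp : AddMonoid.exponent B = q :=
    Nat.dvd_antisymm (AddMonoid.exponent_dvd_of_forall_nsmul_eq_zero horddvd)
      (AddMonoid.addOrder_dvd_exponent b)
  -- ψ := q' • b
  have hψp : p • (q' • b) = 0 := by rw [smul_smul, hpq', hqb]
  have hψne : q' • b ≠ 0 := by
    intro h
    have : q ∣ q' := addOrderOf_dvd_of_nsmul_eq_zero h
    exact absurd (Nat.le_of_dvd hq'pos this) (not_le.mpr hq'lt)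
  -- the subgroup R = pB and K = B[p]
  set Φ : B →+ B := p • AddMonoidHom.id B with hΦdef
  have hΦ : ∀ x, Φ x = p • x := fun _ => rfl
  have hmemR : ∀ x : B, x ∈ Φ.range ↔ ∃ y, p • y = x := by
    intro x; constructor
    · rintro ⟨y, rfl⟩; exact ⟨y, rfl⟩
    · rintro ⟨y, rfl⟩; exact ⟨y, rfl⟩
  have hRT : ∀ x ∈ Φ.range, T x ∈ Φ.range := by
    rintro x ⟨y, rfl⟩
    exact ⟨T y, (map_nsmul T p y).symm⟩
  have hRTpow : ∀ (j : ℕ), ∀ x ∈ Φ.range, (T ^ j) x ∈ Φ.range := by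
    intro j
    induction j with
    | zero => intro x hx; exact hx
    | succ j IH =>
      intro x hx
      have : (T ^ (j+1)) x = (T ^ j) (T x) := by rw [pow_succ]; rfl
      rw [this]
      exact IH _ (hRT x hx)
  have hcardK : Nat.card Φ.ker = p ^ r' := by rw [aux_ker_card, hr]
  -- the quotient B ⧸ pB with induced endomorphism
  have hle : Φ.range ≤ Φ.range.comap (T : B →+ B) := by
    intro x hx
    exact hRT x hx
  set T' : AddMonoid.End (B ⧸ Φ.range) := QuotientAddGroup.map Φ.range Φ.range (T : B →+ B) hle with hT'def
  set mk : B →+ B ⧸ Φ.range := QuotientAddGroup.mk' Φ.range with hmkdef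
  have hmkT : ∀ x, mk (T x) = T' (mk x) := by
    intro x
    rw [hT'def, hmkdef]
    rfl
  have hmksurj : Function.Surjective mk := QuotientAddGroup.mk'_surjective _
  have hmk0 : ∀ x : B, mk x = 0 ↔ x ∈ Φ.range := by
    intro x; exact QuotientAddGroup.eq_zero_iff x
  have hQtor : ∀ z : B ⧸ Φ.range, p • z = 0 := by
    intro z
    obtain ⟨x, rfl⟩ := hmksurj z
    rw [← map_nsmul, hmk0]
    exact ⟨x, rfl⟩
  have hQcyc : ∀ z : B ⧸ Φ.range, ∃ f : Polynomial ℤ, z = aeval T' f (mk b) := by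
    intro z
    obtain ⟨x, rfl⟩ := hmksurj z
    obtain ⟨f, rfl⟩ := hcyc x
    exact ⟨f, aux_comm mk T T' hmkT f b⟩
  have hQpow : ∀ (n : ℕ) (x : B), (T' ^ n) (mk x) = mk ((T ^ n) x) :=
    fun n x => (aux_pow mk T T' hmkT n x).symm
  have hM' : T' ^ M = 0 := by
    apply AddMonoidHom.ext
    intro z
    obtain ⟨x, rfl⟩ := hmksurj z
    show (T' ^ M) (mk x) = 0
    rw [hQpow, hM]
    show mk 0 = 0
    rw [map_zero]
  have hex : ∃ n : ℕ, (T' ^ n) (mk b) = 0 := ⟨M, by rw [hM']; rfl⟩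
  set n : ℕ := Nat.find hex with hndef
  have hnspec : (T' ^ n) (mk b) = 0 := Nat.find_spec hex
  have hnmin : ∀ i < n, (T' ^ i) (mk b) ≠ 0 := fun i hi => Nat.find_min hex (hndef ▸ hi)
  -- card of quotient = p ^ n, hence n = r'
  have hQle : Nat.card (B ⧸ Φ.range) ≤ p ^ n :=
    aux_card_le hp T' (mk b) hQcyc (fun j => hQtor _) n hnspec
  have hQge : p ^ n ≤ Nat.card (B ⧸ Φ.range) :=
    aux_card_ge hp T' M hM' (mk b) (fun j => hQtor _) n hnmin
  have hnr' : n = r' := by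
    rw [hr] at hQle hQge
    exact Nat.pow_right_injective hp.two_le (le_antisymm hQge hQle)
  have hTr'R : (T ^ r') b ∈ Φ.range := by
    rw [← hmk0, ← hQpow, ← hnr']
    exact hnspec
  have hTiR : ∀ i < r', (T ^ i) b ∉ Φ.range := by
    intro i hi hmem
    exact hnmin i (hnr' ▸ hi) (by rw [hQpow, hmk0]; exact hmem)
  -- commutation of T-powers with aeval
  have hcomm : ∀ (f : Polynomial ℤ) (j : ℕ) (x : B),
      (T ^ j) (aeval T f x) = aeval T f ((T ^ j) x) := by
    intro f j x
    have h1 : (T ^ j) (aeval T f x) = (aeval T (X ^ j * f)) x := by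
      rw [map_mul, map_pow, aeval_X]; rfl
    have h2 : aeval T f ((T ^ j) x) = (aeval T (f * X ^ j)) x := by
      rw [map_mul, map_pow, aeval_X]; rfl
    rw [h1, h2, mul_comm]
  -- the socle as a subgroup with induced endomorphism
  have hTK : ∀ x : B, x ∈ Φ.ker → T x ∈ Φ.ker := by
    intro x hx
    rw [AddMonoidHom.mem_ker] at hx ⊢
    show p • T x = 0
    rw [← map_nsmul]
    have : p • x = 0 := hx
    rw [this, map_zero]
  set T'' : AddMonoid.End Φ.ker :=
    AddMonoidHom.codRestrict ((T : B →+ B).domRestrict Φ.ker) Φ.ker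
      (fun x => hTK x.val x.prop) with hT''def
  have hsub : ∀ x : Φ.ker, (Φ.ker.subtype) (T'' x) = T (Φ.ker.subtype x) := fun _ => rfl
  have hKtor : ∀ x : Φ.ker, p • x = 0 := by
    intro x
    apply Subtype.ext
    show p • (x : B) = 0
    exact x.prop
  have hsmem : s ∈ Φ.ker := hsS
  set sK : Φ.ker := ⟨s, hsmem⟩ with hsKdef
  have hKcyc : ∀ x : Φ.ker, ∃ f : Polynomial ℤ, x = aeval T'' f sK := by
    intro x
    obtain ⟨f, hf⟩ := hsoc x.val x.prop
    refine ⟨f, Subtype.ext ?_⟩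
    show (x : B) = (Φ.ker.subtype) (aeval T'' f sK)
    rw [aux_comm Φ.ker.subtype T'' T hsub f sK]
    exact hf
  have hM'' : T'' ^ M = 0 := by
    apply AddMonoidHom.ext
    intro x
    apply Subtype.ext
    show (Φ.ker.subtype) ((T'' ^ M) x) = 0
    rw [aux_pow Φ.ker.subtype T'' T hsub M x, hM]
    rfl
  have hexK : ∃ m : ℕ, (T'' ^ m) sK = 0 := ⟨M, by rw [hM'']; rfl⟩
  set m : ℕ := Nat.find hexK with hmdef
  have hmspec : (T'' ^ m) sK = 0 := Nat.find_spec hexK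
  have hmmin : ∀ i < m, (T'' ^ i) sK ≠ 0 := fun i hi => Nat.find_min hexK (hmdef ▸ hi)
  have hKle : Nat.card Φ.ker ≤ p ^ m :=
    aux_card_le hp T'' sK hKcyc (fun j => hKtor _) m hmspec
  have hKge : p ^ m ≤ Nat.card Φ.ker :=
    aux_card_ge hp T'' M hM'' sK (fun j => hKtor _) m hmmin
  have hmr' : m = r' := by
    rw [hcardK] at hKle hKge
    exact Nat.pow_right_injective hp.two_le (le_antisymm hKge hKle)
  have hTr's : (T ^ r') s = 0 := by
    have := congrArg (Φ.ker.subtype) hmspec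
    rw [aux_pow Φ.ker.subtype T'' T hsub m sK] at this
    rw [← hmr']
    exact this
  have hTis : ∀ i < r', (T ^ i) s ≠ 0 := by
    intro i hi h0
    apply hmmin i (hmr' ▸ hi)
    apply Subtype.ext
    show (Φ.ker.subtype) ((T'' ^ i) sK) = ((0 : Φ.ker) : B)
    rw [aux_pow Φ.ker.subtype T'' T hsub i sK]
    exact h0
  have hsocann : ∀ x : B, p • x = 0 → (T ^ r') x = 0 := by
    intro x hx
    obtain ⟨f, rfl⟩ := hsoc x hx
    rw [hcomm, hTr's, map_zero]
  -- r' is positive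
  have hr'pos : 1 ≤ r' := by
    by_contra hcon
    have hr0 : r' = 0 := by omega
    have hcard1 : Nat.card Φ.ker = 1 := by rw [hcardK, hr0, pow_zero]
    have hbot : Φ.ker = ⊥ := AddSubgroup.eq_bot_of_card_eq _ hcard1
    have : q' • b ∈ Φ.ker := hψp
    rw [hbot, AddSubgroup.mem_bot] at this
    exact hψne this
  -- (ii) → (⋆)
  have hA1 : (∀ i < r', addOrderOf ((T ^ i) b) = q) → q' • (T ^ (r'-1)) b ≠ 0 := by
    intro h hzero
    have hord := h (r'-1) (by omega)
    have hdd : addOrderOf ((T ^ (r'-1)) b) ∣ q' := addOrderOf_dvd_of_nsmul_eq_zero hzero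
    rw [hord] at hdd
    exact absurd (Nat.le_of_dvd hq'pos hdd) (not_le.mpr hq'lt)
  -- (⋆) → (ii)
  have hA2 : q' • (T ^ (r'-1)) b ≠ 0 → (∀ i < r', addOrderOf ((T ^ i) b) = q) := by
    intro hstar i hi
    have hne : q' • (T ^ i) b ≠ 0 := by
      intro h0
      apply hstar
      have e1 : (T ^ (r'-1-i)) ((T ^ i) b) = (T ^ (r'-1)) b := by
        have : T ^ (r'-1-i) * T ^ i = T ^ (r'-1) := by
          rw [← pow_add]
          congr 1
          omega
        rw [← this]
        rfl
      rw [← e1, ← map_nsmul, h0, map_zero]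
    obtain ⟨j, hjle, hj⟩ := (Nat.dvd_prime_pow hp).mp
      (hqe ▸ addOrderOf_dvd_of_nsmul_eq_zero (horddvd ((T ^ i) b)))
    have hje : j = e := by
      by_contra hne2
      apply hne
      apply addOrderOf_dvd_iff_nsmul_eq_zero.mp
      rw [hj, hq'e]
      exact pow_dvd_pow p (by omega)
    rw [hj, hje, ← hqe]
  -- (⋆) → (iii)
  have hB1 : q' • (T ^ (r'-1)) b ≠ 0 →
      (∀ x : B, p • x = 0 → ∃ f : Polynomial ℤ, x = aeval T f (q' • b)) := by
    intro hstar
    obtain ⟨h, hh⟩ := hsoc (q' • b) hψp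
    have hc0 : ¬ (p:ℤ) ∣ h.coeff 0 := by
      intro hdvd
      apply hstar
      have hsplit : q' • b = T (aeval T h.divX s) := by
        calc q' • b = aeval T (X * h.divX + C (h.coeff 0)) s := by rw [X_mul_divX_add, ← hh]
        _ = aeval T (X * h.divX) s + aeval T (C (h.coeff 0)) s := by rw [map_add]; rfl
        _ = T (aeval T h.divX s) + (h.coeff 0) • s := by
            rw [map_mul, aeval_X, aeval_C]
            show (T * aeval T h.divX) s + _ = _
            rw [algCast_apply]
            rfl
        _ = T (aeval T h.divX s) := by rw [aux_zsmul hdvd hsS, add_zero]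
      have e1 : q' • (T ^ (r'-1)) b = (T ^ (r'-1)) (q' • b) := (map_nsmul _ _ _).symm
      have e2 : (T ^ (r'-1)) (T (aeval T h.divX s)) = (T ^ r') (aeval T h.divX s) := by
        have : T ^ (r'-1) * T = T ^ r' := by
          rw [← pow_succ]
          congr 1
          omega
        rw [← this]
        rfl
      rw [e1, hsplit, e2, hcomm, hTr's, map_zero]
    obtain ⟨g, hg⟩ := aux_inv hp T M hM h hc0
    have hs_gen : s = aeval T g (q' • b) := by rw [hh]; exact (hg s hsS).symm
    intro x hx
    obtain ⟨f, hf⟩ := hsoc x hx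
    refine ⟨f * g, ?_⟩
    rw [hf, hs_gen, map_mul]
    rfl
  -- (iii) → (⋆)
  have hB2 : (∀ x : B, p • x = 0 → ∃ f : Polynomial ℤ, x = aeval T f (q' • b)) →
      q' • (T ^ (r'-1)) b ≠ 0 := by
    intro hiii hzero
    have hψK : q' • b ∈ Φ.ker := hψp
    set ψK : Φ.ker := ⟨q' • b, hψK⟩ with hψKdef
    have hKcyc2 : ∀ x : Φ.ker, ∃ f : Polynomial ℤ, x = aeval T'' f ψK := by
      intro x
      obtain ⟨f, hf⟩ := hiii x.val x.prop
      refine ⟨f, Subtype.ext ?_⟩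
      show (x : B) = Φ.ker.subtype (aeval T'' f ψK)
      rw [aux_comm Φ.ker.subtype T'' T hsub f ψK]
      exact hf
    have hT''r1 : (T'' ^ (r'-1)) ψK = 0 := by
      apply Subtype.ext
      show Φ.ker.subtype ((T'' ^ (r'-1)) ψK) = ((0 : Φ.ker) : B)
      rw [aux_pow Φ.ker.subtype T'' T hsub]
      show (T ^ (r'-1)) (q' • b) = ((0 : Φ.ker) : B)
      rw [map_nsmul, hzero]
      rfl
    have hle2 := aux_card_le hp T'' ψK hKcyc2 (fun j => hKtor _) (r'-1) hT''r1
    rw [hcardK] at hle2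
    exact absurd hle2 (not_le.mpr (Nat.pow_lt_pow_right hp.one_lt (by omega)))
  -- (iv) → (ii)
  have hC1 : (∀ x : B, x ∉ Φ.range → addOrderOf x = AddMonoid.exponent B) →
      (∀ i < r', addOrderOf ((T ^ i) b) = q) := by
    intro hiv i hi
    rw [hiv ((T ^ i) b) (hTiR i hi), hexp]
  -- (ii) → (iv)
  have hC2 : (∀ i < r', addOrderOf ((T ^ i) b) = q) →
      (∀ x : B, x ∉ Φ.range → addOrderOf x = AddMonoid.exponent B) := by
    intro hii x hxR
    obtain ⟨f, hfx⟩ := hcyc x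
    have hfp : ∃ i, ¬ (p:ℤ) ∣ f.coeff i := by
      by_contra hall
      push_neg at hall
      obtain ⟨f₁, hf₁⟩ := (Polynomial.C_dvd_iff_dvd_coeff ((p:ℤ)) f).mpr hall
      apply hxR
      rw [hfx, hf₁]
      refine (hmemR _).mpr ⟨aeval T f₁ b, ?_⟩
      show p • (aeval T f₁ b) = aeval T (C (p:ℤ) * f₁) b
      rw [map_mul]
      show _ = (aeval T (C (p:ℤ))) (aeval T f₁ b)
      rw [aeval_C, algCast_apply, natCast_zsmul]
    set k : ℕ := Nat.find hfp with hkdef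
    have hk1 : ¬ (p:ℤ) ∣ f.coeff k := Nat.find_spec hfp
    have hk2 : ∀ j < k, (p:ℤ) ∣ f.coeff j := fun j hj => not_not.mp (Nat.find_min hfp (hkdef ▸ hj))
    set D : ℕ := f.natDegree + 1 with hDdef
    have hxsum : x = ∑ i ∈ range D, f.coeff i • (T ^ i) b := by
      rw [hfx, Polynomial.aeval_eq_sum_range, end_finsetSum_apply]
      rfl
    have hkr' : k < r' := by
      by_contra hge
      push_neg at hge
      apply hxR
      rw [hxsum]
      apply AddSubgroup.sum_mem
      intro i _
      rcases lt_or_ge i k with hik | hik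
      · obtain ⟨t, ht⟩ := hk2 i hik
        rw [ht]
        refine (hmemR _).mpr ⟨t • (T ^ i) b, ?_⟩
        rw [smul_comm]
        rw [show ((p:ℕ) • (T ^ i) b) = (p:ℤ) • (T ^ i) b from (natCast_zsmul _ _).symm]
        rw [← mul_smul, mul_comm]
      · apply AddSubgroup.zsmul_mem
        have e1 : (T ^ i) b = (T ^ (i - r')) ((T ^ r') b) := by
          have : T ^ (i - r') * T ^ r' = T ^ i := by
            rw [← pow_add]
            congr 1
            omega
          rw [← this]
          rfl
        rw [e1]
        exact hRTpow _ _ hTr'R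
    have hq'x : q' • x ≠ 0 := by
      intro h0
      have hψsum : ∑ i ∈ range D, f.coeff i • (T ^ i) (q' • b) = 0 := by
        have e0 : q' • x = aeval T f (q' • b) := by rw [hfx, map_nsmul]
        rw [e0, Polynomial.aeval_eq_sum_range, end_finsetSum_apply] at h0
        rw [← h0]
        rfl
      have hkD : k < D := by
        by_contra hge
        apply hk1
        rw [Polynomial.coeff_eq_zero_of_natDegree_lt (by omega)]
        exact dvd_zero _
      have hlow : ∀ j < k, f.coeff j • (T ^ j) (q' • b) = 0 := by
        intro j hj
        apply aux_zsmul (hk2 j hj)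
        rw [← map_nsmul, hψp, map_zero]
      have hshift := aux_shift T (fun i => f.coeff i) (q' • b) k D (le_of_lt hkD)
        hlow hψsum
      have hTk0 : (T ^ k) (q' • b) = 0 :=
        aux_sum_zero hp T M hM _ (by rw [← map_nsmul, hψp, map_zero]) _ (D - k)
          (by omega) (by simpa using hk1) hshift
      have hne : q' • (T ^ k) b ≠ 0 := by
        intro h00
        have hdd : addOrderOf ((T ^ k) b) ∣ q' := addOrderOf_dvd_of_nsmul_eq_zero h00
        rw [hii k hkr'] at hdd
        exact absurd (Nat.le_of_dvd hq'pos hdd) (not_le.mpr hq'lt)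
      apply hne
      rw [← map_nsmul]
      exact hTk0
    obtain ⟨j, hjle, hj⟩ := (Nat.dvd_prime_pow hp).mp
      (hqe ▸ addOrderOf_dvd_of_nsmul_eq_zero (horddvd x))
    have hje : j = e := by
      by_contra hne2
      apply hq'x
      apply addOrderOf_dvd_iff_nsmul_eq_zero.mp
      rw [hj, hq'e]
      exact pow_dvd_pow p (by omega)
    rw [hexp, hj, hje, ← hqe]
  exact ⟨⟨fun h2 => hB1 (hA1 h2), fun h3 => hA2 (hB2 h3)⟩,
    ⟨fun h3 => hC2 (hA2 (hB2 h3)), fun h4 => hB1 (hA1 (hC1 h4))⟩⟩
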